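/- arXiv:1712.02568 — 2 statements merged into one kernel-verified Lean document; each statement's English description precedes it below -/
import Mathlib

section
/- Let M and N be as in the construction. The map sending each automorphism π of N to its restriction π₀ to the sort P^N = M is an injective group homomorphism from Aut(N) to Aut(M); moreover, combined with the extension map π₀ ↦ π̂₀, it gives a group isomorphism Aut(M) ≅ Aut(N). -/
/-! The structure `N = N_M` built from a relational structure `M` in the proof of the
main theorem.  `M` has relations `P i` of arity `k i` (indexed by `i : ι`, playing the
role of the pairs `(n, ℓ)`).  The domain of `N` is the disjoint union of a copy of `M`
(the predicate `P^N`), the constant `e`, and the sorts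
`Q i = {(i, j, ā) : ā ∈ M^{k i}, j ≤ ω, and j = ω only if ā ∈ P_i^M}`;
`F i t` projects an element of `Q i` to its `t`-th coordinate, and `G i j` replaces the
index of an element of `Q i` by `j` (both send everything else to `e`).  Here the index
`j ≤ ω` is represented by an element of `ℕ∞`. -/

namespace Constr

variable {M ι : Type} [DecidableEq ι] (k : ι → ℕ) (P : ∀ i, (Fin (k i) → M) → Prop)

/-- The elements of the sort `Q i`. -/
abbrev Qsort (i : ι) : Type := { x : (Fin (k i) → M) × ℕ∞ // x.2 = ⊤ → P i x.1 }

/-- The domain of `N`: a copy of `M`, the point `e`, and the sorts `Q i`. -/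
def Ndom : Type := (M ⊕ Unit) ⊕ (Σ i : ι, Qsort k P i)

/-- The interpretation of the constant `c` of `N`. -/
def e : Ndom k P := Sum.inl (Sum.inr ())

/-- The inclusion of `M` (the predicate `P^N`) into the domain of `N`. -/
def pin (a : M) : Ndom k P := Sum.inl (Sum.inl a)

/-- The inclusion of the sort `Q i` into the domain of `N`. -/
def qin (i : ι) (x : Qsort k P i) : Ndom k P := Sum.inr ⟨i, x⟩

/-- The unary function `F i t` of `N`: the projection of `Q i` onto the `t`-th
`M`-coordinate (and `e` elsewhere). -/
def F (i : ι) (t : Fin (k i)) : Ndom k P → Ndom k P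
  | Sum.inr ⟨i', x⟩ =>
      if h : i' = i then pin k P (x.1.1 (Fin.cast (congrArg k h).symm t)) else e k P
  | _ => e k P

/-- The unary function `G i j` of `N`: replacing the index of an element of `Q i`
by `j < ω` (and `e` elsewhere). -/
def G (i : ι) (j : ℕ) : Ndom k P → Ndom k P
  | Sum.inr ⟨i', x⟩ =>
      if h : i' = i then qin k P i' ⟨(x.1.1, (j : ℕ∞)), fun hj => absurd hj (by simp)⟩
      else e k P
  | _ => e k P

/-- A permutation of the domain of `N` is an automorphism of `N` iff it fixes the
constant `e`, preserves the predicates `P` and `Q i`, and commutes with the functions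
`F i t` and `G i j`. -/
structure IsAutN (π : Equiv.Perm (Ndom k P)) : Prop where
  fix_e : π (e k P) = e k P
  map_P : ∀ a : M, ∃ b : M, π (pin k P a) = pin k P b
  map_Q : ∀ (i : ι) (x : Qsort k P i), ∃ y : Qsort k P i, π (qin k P i x) = qin k P i y
  comm_F : ∀ (i : ι) (t : Fin (k i)) (x : Ndom k P), π (F k P i t x) = F k P i t (π x)
  comm_G : ∀ (i : ι) (j : ℕ) (x : Ndom k P), π (G k P i j x) = G k P i j (π x)

/-- A permutation of `M` is an automorphism of `M` iff it preserves every relation. -/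
def IsAutM (σ : Equiv.Perm M) : Prop := ∀ (i : ι) (v : Fin (k i) → M), P i (σ ∘ v) ↔ P i v


/-- The automorphism group of `M`, as a subgroup of `Sym(M)`. -/
def autM : Subgroup (Equiv.Perm M) where
  carrier := {σ | IsAutM k P σ}
  one_mem' := fun _ _ => Iff.rfl
  mul_mem' := by
    intro σ τ hσ hτ i v
    have h1 := hσ i (⇑τ ∘ v)
    have h2 := hτ i v
    exact (h1.trans h2)
  inv_mem' := by
    intro σ hσ i v
    have := hσ i (⇑σ⁻¹ ∘ v)
    rw [show ⇑σ ∘ ⇑σ⁻¹ ∘ v = v from funext fun t => by simp] at this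
    exact this.symm

/-- The automorphism group of `N`, as a subgroup of `Sym(N)`. -/
def autN : Subgroup (Equiv.Perm (Ndom k P)) where
  carrier := {π | IsAutN k P π}
  one_mem' := ⟨rfl, fun a => ⟨a, rfl⟩, fun i x => ⟨x, rfl⟩, fun _ _ _ => rfl, fun _ _ _ => rfl⟩
  mul_mem' := by
    rintro π σ hπ hσ
    refine ⟨?_, fun a => ?_, fun i x => ?_, fun i t x => ?_, fun i j x => ?_⟩
    · show π (σ _) = _
      rw [hσ.fix_e, hπ.fix_e]
    · obtain ⟨b, hb⟩ := hσ.map_P a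
      obtain ⟨c, hc⟩ := hπ.map_P b
      exact ⟨c, by show π (σ _) = _; rw [hb, hc]⟩
    · obtain ⟨y, hy⟩ := hσ.map_Q i x
      obtain ⟨z, hz⟩ := hπ.map_Q i y
      exact ⟨z, by show π (σ _) = _; rw [hy, hz]⟩
    · show π (σ _) = _
      rw [hσ.comm_F, hπ.comm_F]; rfl
    · show π (σ _) = _
      rw [hσ.comm_G, hπ.comm_G]; rfl
  inv_mem' := by
    rintro π hπ
    have fixe : π⁻¹ (e k P) = e k P := by
      have := congrArg (⇑π⁻¹) hπ.fix_e
      rw [show ∀ y, π⁻¹ (π y) = y from fun y => Equiv.Perm.inv_eq_iff_eq.mpr rfl] at this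
      exact this.symm
    refine ⟨fixe, fun a => ?_, fun i x => ?_, fun i t x => ?_, fun i j x => ?_⟩
    · rcases h : π⁻¹ (pin k P a) with (b | u) | ⟨i, y⟩
      · exact ⟨b, rfl⟩
      · exfalso
        have h2 := congrArg (⇑π) h
        rw [show ∀ y, π (π⁻¹ y) = y from fun y => (Equiv.eq_symm_apply π).mp rfl, show Sum.inl (Sum.inr u) = e k P from rfl,
          hπ.fix_e] at h2
        exact absurd h2 (fun hh => by injection hh with h3; injection h3)
      · exfalso
        obtain ⟨z, hz⟩ := hπ.map_Q i y
        have h2 := congrArg (⇑π) h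
        rw [show ∀ y, π (π⁻¹ y) = y from fun y => (Equiv.eq_symm_apply π).mp rfl, show (Sum.inr ⟨i, y⟩ : Ndom k P) = qin k P i y from rfl,
          hz] at h2
        exact absurd h2 (fun hh => by injection hh)
    · rcases h : π⁻¹ (qin k P i x) with (b | u) | ⟨i', y⟩
      · exfalso
        obtain ⟨c, hc⟩ := hπ.map_P b
        have h2 := congrArg (⇑π) h
        rw [show ∀ y, π (π⁻¹ y) = y from fun y => (Equiv.eq_symm_apply π).mp rfl, show (Sum.inl (Sum.inl b) : Ndom k P) = pin k P b from rfl,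
          hc] at h2
        exact absurd h2 (fun hh => by injection hh)
      · exfalso
        have h2 := congrArg (⇑π) h
        rw [show ∀ y, π (π⁻¹ y) = y from fun y => (Equiv.eq_symm_apply π).mp rfl, show Sum.inl (Sum.inr u) = e k P from rfl,
          hπ.fix_e] at h2
        exact absurd h2 (fun hh => by injection hh)
      · obtain ⟨z, hz⟩ := hπ.map_Q i' y
        have h2 := congrArg (⇑π) h
        rw [show ∀ y, π (π⁻¹ y) = y from fun y => (Equiv.eq_symm_apply π).mp rfl, show (Sum.inr ⟨i', y⟩ : Ndom k P) = qin k P i' y from rfl,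
          hz] at h2
        obtain rfl : i = i' := congrArg Sigma.fst (Sum.inr_injective h2)
        exact ⟨y, rfl⟩
    · have h1 := hπ.comm_F i t (π⁻¹ x)
      rw [show ∀ y, π (π⁻¹ y) = y from fun y => (Equiv.eq_symm_apply π).mp rfl] at h1
      have h2 := congrArg (⇑π⁻¹) h1
      rw [show ∀ y, π⁻¹ (π y) = y from fun y => Equiv.Perm.inv_eq_iff_eq.mpr rfl] at h2
      exact h2.symm
    · have h1 := hπ.comm_G i j (π⁻¹ x)
      rw [show ∀ y, π (π⁻¹ y) = y from fun y => (Equiv.eq_symm_apply π).mp rfl] at h1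
      have h2 := congrArg (⇑π⁻¹) h1
      rw [show ∀ y, π⁻¹ (π y) = y from fun y => Equiv.Perm.inv_eq_iff_eq.mpr rfl] at h2
      exact h2.symm


set_option linter.unusedSectionVars false

lemma pin_injective : Function.Injective (pin k P) := fun a b h => by
  injection h with h; injection h

lemma qin_injective (i : ι) : Function.Injective (qin k P i) := fun x y h => by
  injection h with h
  exact eq_of_heq (Sigma.mk.inj_iff.1 h).2

lemma F_qin (i : ι) (t : Fin (k i)) (x : Qsort k P i) :
    F k P i t (qin k P i x) = pin k P (x.1.1 t) := by
  simp [F, qin]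

lemma G_qin (i : ι) (j : ℕ) (x : Qsort k P i) :
    G k P i j (qin k P i x) =
      qin k P i ⟨(x.1.1, (j : ℕ∞)), fun hj => absurd hj (by simp)⟩ := by
  simp [G, qin]; rfl

/-- The restriction of a permutation of `N` to `M` (junk value elsewhere). -/
def restr (π : Equiv.Perm (Ndom k P)) (a : M) : M :=
  match π (pin k P a) with
  | Sum.inl (Sum.inl b) => b
  | _ => a

lemma restr_spec {π : Equiv.Perm (Ndom k P)} (hπ : IsAutN k P π) (a : M) :
    π (pin k P a) = pin k P (restr k P π a) := by
  obtain ⟨b, hb⟩ := hπ.map_P a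
  have hr : restr k P π a = b := by unfold restr; rw [hb]; rfl
  rw [hb, hr]

lemma isAutN_inv {π : Equiv.Perm (Ndom k P)} (hπ : IsAutN k P π) : IsAutN k P π⁻¹ :=
  (autN k P).inv_mem hπ

lemma restr_inv_restr {π : Equiv.Perm (Ndom k P)} (hπ : IsAutN k P π) (a : M) :
    restr k P π⁻¹ (restr k P π a) = a :=
  pin_injective k P (by
    rw [← restr_spec k P (isAutN_inv k P hπ), ← restr_spec k P hπ,
      show ∀ y, π⁻¹ (π y) = y from fun y => Equiv.Perm.inv_eq_iff_eq.mpr rfl])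

/-- Key lemma: the image of an element of `Q i` is determined coordinatewise. -/
lemma Q_behave {π : Equiv.Perm (Ndom k P)} (hπ : IsAutN k P π) (i : ι)
    (x y : Qsort k P i) (hy : π (qin k P i x) = qin k P i y) :
    (∀ t, y.1.1 t = restr k P π (x.1.1 t)) ∧ y.1.2 = x.1.2 := by
  constructor
  · intro t
    have h := hπ.comm_F i t (qin k P i x)
    rw [hy, F_qin, F_qin, restr_spec k P hπ] at h
    exact (pin_injective k P h).symm
  · have key : ∀ j : ℕ, π (qin k P i ⟨(x.1.1, (j : ℕ∞)), fun hj => absurd hj (by simp)⟩)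
        = qin k P i ⟨(y.1.1, (j : ℕ∞)), fun hj => absurd hj (by simp)⟩ := by
      intro j
      have h := hπ.comm_G i j (qin k P i x)
      rw [G_qin, hy, G_qin] at h
      exact h
    cases hx2 : x.1.2 with
    | top =>
      cases hy2 : y.1.2 with
      | top => rfl
      | coe j =>
        exfalso
        have hyy : y = ⟨(y.1.1, (j : ℕ∞)), fun hj => absurd hj (by simp)⟩ :=
          Subtype.ext (Prod.ext rfl hy2)
        have h := key j
        rw [← hyy, ← hy] at h
        have hx := qin_injective k P i (π.injective h)
        have := congrArg (fun z => z.1.2) hx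
        simp [hx2] at this
    | coe j =>
      have hxx : x = ⟨(x.1.1, (j : ℕ∞)), fun hj => absurd hj (by simp)⟩ :=
        Subtype.ext (Prod.ext rfl hx2)
      have h := key j
      rw [← hxx, hy] at h
      have := congrArg (fun z => z.1.2) (qin_injective k P i h)
      simpa using this

/-- The restriction, as a permutation of `M`. -/
def restrEquiv {π : Equiv.Perm (Ndom k P)} (hπ : IsAutN k P π) : Equiv.Perm M where
  toFun := restr k P π
  invFun := restr k P π⁻¹
  left_inv := restr_inv_restr k P hπ
  right_inv := fun a => by
    have := restr_inv_restr k P (isAutN_inv k P hπ) a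
    rwa [inv_inv] at this

lemma isAutM_restr_half {π : Equiv.Perm (Ndom k P)} (hπ : IsAutN k P π)
    (i : ι) (v : Fin (k i) → M) (hv : P i v) : P i (restr k P π ∘ v) := by
  obtain ⟨y, hy⟩ := hπ.map_Q i ⟨(v, ⊤), fun _ => hv⟩
  obtain ⟨h1, h2⟩ := Q_behave k P hπ i _ y hy
  have hPy := y.2 h2
  have hfe : y.1.1 = restr k P π ∘ v := funext fun t => h1 t
  rwa [hfe] at hPy

lemma isAutM_restr {π : Equiv.Perm (Ndom k P)} (hπ : IsAutN k P π) :
    IsAutM k P (restrEquiv k P hπ) := by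
  intro i v
  show P i (restr k P π ∘ v) ↔ P i v
  constructor
  · intro h
    have h2 := isAutM_restr_half k P (isAutN_inv k P hπ) i (restr k P π ∘ v) h
    have heq : restr k P π⁻¹ ∘ (restr k P π ∘ v) = v :=
      funext fun t => restr_inv_restr k P hπ (v t)
    rwa [heq] at h2
  · exact isAutM_restr_half k P hπ i v
lemma isAutM_inv {σ : Equiv.Perm M} (hσ : IsAutM k P σ) : IsAutM k P σ⁻¹ :=
  (autM k P).inv_mem hσ

/-- The extension of an automorphism of `M` to `N`, as a bare function. -/
def extFun (σ : Equiv.Perm M) (hσ : IsAutM k P σ) : Ndom k P → Ndom k P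
  | Sum.inl (Sum.inl a) => Sum.inl (Sum.inl (σ a))
  | Sum.inl (Sum.inr u) => Sum.inl (Sum.inr u)
  | Sum.inr ⟨i, x⟩ =>
      Sum.inr ⟨i, ⟨(⇑σ ∘ x.1.1, x.1.2), fun hj => (hσ i x.1.1).mpr (x.2 hj)⟩⟩

lemma extFun_inv (σ : Equiv.Perm M) (hσ : IsAutM k P σ) (z : Ndom k P) :
    extFun k P σ⁻¹ (isAutM_inv k P hσ) (extFun k P σ hσ z) = z := by
  rcases z with (a | u) | ⟨i, x⟩
  · simp [extFun]; rfl
  · rfl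
  · show Sum.inr _ = Sum.inr _
    congr 1
    refine Sigma.ext rfl (heq_of_eq (Subtype.ext (Prod.ext ?_ rfl)))
    funext t
    simp

/-- The extension of an automorphism of `M` to `N`, as a permutation. -/
def extPerm (σ : Equiv.Perm M) (hσ : IsAutM k P σ) : Equiv.Perm (Ndom k P) where
  toFun := extFun k P σ hσ
  invFun := extFun k P σ⁻¹ (isAutM_inv k P hσ)
  left_inv := extFun_inv k P σ hσ
  right_inv := fun z => by
    have := extFun_inv k P σ⁻¹ (isAutM_inv k P hσ) z
    simpa using this

lemma isAutN_ext (σ : Equiv.Perm M) (hσ : IsAutM k P σ) :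
    IsAutN k P (extPerm k P σ hσ) := by
  refine ⟨rfl, fun a => ⟨σ a, rfl⟩, fun i x => ⟨_, rfl⟩, fun i t z => ?_, fun i j z => ?_⟩
  · rcases z with (a | u) | ⟨i', x⟩
    · rfl
    · rfl
    · show extPerm k P σ hσ (F k P i t (Sum.inr ⟨i', x⟩)) = _
      by_cases h : i' = i
      · subst h
        rw [show (Sum.inr ⟨i', x⟩ : Ndom k P) = qin k P i' x from rfl, F_qin]
        show extPerm k P σ hσ (pin k P (x.1.1 t)) =
          F k P i' t (qin k P i' ⟨(⇑σ ∘ x.1.1, x.1.2), _⟩)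
        rw [F_qin]
        rfl
      · have h1 : (extPerm k P σ hσ) (Sum.inr ⟨i', x⟩ : Ndom k P)
            = Sum.inr ⟨i', ⟨(⇑σ ∘ x.1.1, x.1.2), fun hj => (hσ i' x.1.1).mpr (x.2 hj)⟩⟩ := rfl
        show (extPerm k P σ hσ) (F k P i t (Sum.inr ⟨i', x⟩)) = _
        rw [h1]
        simp only [F, dif_neg h]
        rfl
  · rcases z with (a | u) | ⟨i', x⟩
    · rfl
    · rfl
    · by_cases h : i' = i
      · subst h
        show extPerm k P σ hσ (G k P i' j (qin k P i' x)) =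
          G k P i' j (qin k P i' ⟨(⇑σ ∘ x.1.1, x.1.2), _⟩)
        rw [G_qin, G_qin]
        rfl
      · have h1 : (extPerm k P σ hσ) (Sum.inr ⟨i', x⟩ : Ndom k P)
            = Sum.inr ⟨i', ⟨(⇑σ ∘ x.1.1, x.1.2), fun hj => (hσ i' x.1.1).mpr (x.2 hj)⟩⟩ := rfl
        show (extPerm k P σ hσ) (G k P i j (Sum.inr ⟨i', x⟩)) = _
        rw [h1]
        simp only [G, dif_neg h]
        rfl

lemma restr_ext (σ : Equiv.Perm M) (hσ : IsAutM k P σ) (a : M) :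
    restr k P (extPerm k P σ hσ) a = σ a :=
  pin_injective k P (by
    rw [← restr_spec k P (isAutN_ext k P σ hσ)]; rfl)

/-- Restriction to the sort `P^N = M` is an injective group
homomorphism from `Aut(N)` to `Aut(M)`, and (together with the extension map) it is a
group isomorphism `Aut(N) ≅ Aut(M)`. -/
theorem autN_restriction_group_iso {M ι : Type} [DecidableEq ι] [Countable M] [Countable ι]
    (k : ι → ℕ) (P : ∀ i, (Fin (k i) → M) → Prop)
    (hP : ∀ (i : ι) (v : Fin (k i) → M), P i v → Function.Injective v) :
    ∃ Φ : autN k P →* autM k P,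
      (∀ (π : autN k P) (a : M),
        (π : Equiv.Perm (Ndom k P)) (pin k P a) = pin k P ((Φ π : Equiv.Perm M) a)) ∧
      Function.Injective Φ ∧ Function.Bijective Φ := by
  classical
  have memN : ∀ π : autN k P, IsAutN k P (π : Equiv.Perm (Ndom k P)) := fun π => π.2
  have memM : ∀ (σ : Equiv.Perm M), σ ∈ autM k P ↔ IsAutM k P σ := fun σ => Iff.rfl
  -- the restriction homomorphism
  have restr_mul : ∀ (π τ : Equiv.Perm (Ndom k P)), IsAutN k P π → IsAutN k P τ →
      ∀ a : M, restr k P (π * τ) a = restr k P π (restr k P τ a) := by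
    intro π τ hπ hτ a
    refine pin_injective k P ?_
    rw [← restr_spec k P ((autN k P).mul_mem hπ hτ)]
    show π (τ (pin k P a)) = _
    rw [restr_spec k P hτ, restr_spec k P hπ]
  refine ⟨MonoidHom.mk'
      (fun π => ⟨restrEquiv k P (memN π), (memM _).2 (isAutM_restr k P (memN π))⟩)
      ?_, ?_, ?_⟩
  · intro π τ
    refine Subtype.ext (Equiv.ext fun a => ?_)
    exact restr_mul π.1 τ.1 (memN π) (memN τ) a
  · exact fun π a => restr_spec k P (memN π) a
  have hinj : Function.Injective fun π : autN k P =>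
      (⟨restrEquiv k P (memN π), (memM _).2 (isAutM_restr k P (memN π))⟩ : autM k P) := by
    intro π τ h
    have hr : ∀ a : M, restr k P (π : Equiv.Perm (Ndom k P)) a
        = restr k P (τ : Equiv.Perm (Ndom k P)) a := fun a =>
      congrFun (congrArg (fun s : autM k P => ((s : Equiv.Perm M) : M → M)) h) a
    refine Subtype.ext (Equiv.ext fun z => ?_)
    rcases z with (a | u) | ⟨i, x⟩
    · show (π : Equiv.Perm (Ndom k P)) (pin k P a) = (τ : Equiv.Perm (Ndom k P)) (pin k P a)
      rw [restr_spec k P (memN π), restr_spec k P (memN τ), hr]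
    · show (π : Equiv.Perm (Ndom k P)) (e k P) = (τ : Equiv.Perm (Ndom k P)) (e k P)
      rw [(memN π).fix_e, (memN τ).fix_e]
    · show (π : Equiv.Perm (Ndom k P)) (qin k P i x) = (τ : Equiv.Perm (Ndom k P)) (qin k P i x)
      obtain ⟨y, hy⟩ := (memN π).map_Q i x
      obtain ⟨y', hy'⟩ := (memN τ).map_Q i x
      obtain ⟨h1, h2⟩ := Q_behave k P (memN π) i x y hy
      obtain ⟨h1', h2'⟩ := Q_behave k P (memN τ) i x y' hy'
      have : y = y' := Subtype.ext (Prod.ext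
        (funext fun t => by rw [h1 t, h1' t, hr]) (h2.trans h2'.symm))
      rw [hy, hy', this]
  refine ⟨hinj, hinj, ?_⟩
  rintro ⟨σ, hσ⟩
  have hσ' : IsAutM k P σ := (memM σ).1 hσ
  refine ⟨⟨extPerm k P σ hσ', isAutN_ext k P σ hσ'⟩, ?_⟩
  exact Subtype.ext (Equiv.ext fun a => restr_ext k P σ hσ' a)

end Constr
end

section
/- Let M be a countable relational structure whose relations hold only of repetition-free tuples. For tuples ā, b̄ ∈ Mⁿ without repetitions, if π₀ ∈ Sym(M) maps ā to b̄ and π₀ extends to an automorphism of the structure N built over M, then ā ∈ P_{(n,ℓ)}^M if and only if b̄ ∈ P_{(n,ℓ)}^M. -/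
/-! The structure `N = N_M` built from a relational structure `M` in the proof of the
main theorem.  `M` has relations `P i` of arity `k i` (indexed by `i : ι`, playing the
role of the pairs `(n, ℓ)`).  The domain of `N` is the disjoint union of a copy of `M`
(the predicate `P^N`), the constant `e`, and the sorts
`Q i = {(i, j, ā) : ā ∈ M^{k i}, j ≤ ω, and j = ω only if ā ∈ P_i^M}`;
`F i t` projects an element of `Q i` to its `t`-th coordinate, and `G i j` replaces the
index of an element of `Q i` by `j` (both send everything else to `e`).  Here the index
`j ≤ ω` is represented by an element of `ℕ∞`. -/

namespace Constr

variable {M ι : Type} [DecidableEq ι] (k : ι → ℕ) (P : ∀ i, (Fin (k i) → M) → Prop)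

lemma forward_transfer {M ι : Type} [DecidableEq ι]
    (k : ι → ℕ) (P : ∀ i, (Fin (k i) → M) → Prop)
    (i : ι) (a b : Fin (k i) → M)
    (σ : Equiv.Perm M) (hab : ⇑σ ∘ a = b)
    (π : Equiv.Perm (Ndom k P)) (hπ : IsAutN k P π)
    (hex : ∀ x : M, π (pin k P x) = pin k P (σ x)) (hPa : P i a) : P i b := by
  set x : Qsort k P i := ⟨(a, (⊤ : ℕ∞)), fun _ => hPa⟩ with hx
  obtain ⟨y, hy⟩ := hπ.map_Q i x
  have hcoord : y.1.1 = b := by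
    funext t
    have h1 := hπ.comm_F i t (qin k P i x)
    rw [F_qin, hy, F_qin, hex] at h1
    have := pin_injective k P h1
    rw [← this, hx]
    simpa using congrFun hab t
  -- the index of y is ⊤
  rcases h2 : y.1.2 with _ | j
  · -- index ⊤ : done
    have := y.2 h2
    rwa [hcoord] at this
  · -- index finite: contradiction
    exfalso
    have h3 := hπ.comm_G i j (qin k P i x)
    rw [G_qin, hy, G_qin] at h3
    have hyy : (⟨(y.1.1, (j : ℕ∞)), fun hj => absurd hj (by simp)⟩ : Qsort k P i) = y := by
      exact Subtype.ext (Prod.ext_iff.mpr ⟨rfl, h2.symm⟩)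
    rw [hyy, ← hy] at h3
    have h4 := qin_injective k P i (π.injective h3)
    have := congrArg (fun z => z.1.2) h4
    simp [hx] at this

/-- For repetition-free tuples `ā, b̄ ∈ Mⁿ`, if a permutation `π₀` of
`M` maps `ā` to `b̄` and `π₀` extends to an automorphism of the structure `N` built over
`M`, then `ā ∈ P_{(n,ℓ)}^M` iff `b̄ ∈ P_{(n,ℓ)}^M`. -/
theorem rel_transfer_of_extends {M ι : Type} [DecidableEq ι] [Countable M] [Countable ι]
    (k : ι → ℕ) (P : ∀ i, (Fin (k i) → M) → Prop)
    (hP : ∀ (i : ι) (v : Fin (k i) → M), P i v → Function.Injective v)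
    (i : ι) (a b : Fin (k i) → M)
    (ha : Function.Injective a) (hb : Function.Injective b)
    (σ : Equiv.Perm M) (hab : ⇑σ ∘ a = b)
    (hext : ∃ π : Equiv.Perm (Ndom k P), IsAutN k P π ∧
      ∀ x : M, π (pin k P x) = pin k P (σ x)) :
    P i a ↔ P i b := by
  obtain ⟨π, hπ, hex⟩ := hext
  have hex' : ∀ x : M, π.symm (pin k P x) = pin k P (σ.symm x) := by
    intro x
    apply π.injective
    rw [Equiv.apply_symm_apply, hex, Equiv.apply_symm_apply]
  have hπ' : IsAutN k P π.symm := by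
    constructor
    · apply π.injective; rw [Equiv.apply_symm_apply, hπ.fix_e]
    · intro a
      exact ⟨σ.symm a, hex' a⟩
    · intro i x
      rcases hz : π.symm (qin k P i x) with (m | u) | ⟨i', w⟩
      · exfalso
        have := π.apply_symm_apply (qin k P i x)
        rw [hz] at this
        rw [show (Sum.inl (Sum.inl m) : Ndom k P) = pin k P m from rfl, hex] at this
        simp [pin, qin] at this
      · exfalso
        have := π.apply_symm_apply (qin k P i x)
        rw [hz] at this
        rw [show (Sum.inl (Sum.inr u) : Ndom k P) = e k P from rfl, hπ.fix_e] at this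
        simp [e, qin] at this
      · have := π.apply_symm_apply (qin k P i x)
        rw [hz] at this
        obtain ⟨w', hw'⟩ := hπ.map_Q i' w
        rw [show (Sum.inr ⟨i', w⟩ : Ndom k P) = qin k P i' w from rfl, hw'] at this
        have hii : i' = i := by
          have := (Sum.inr.inj this)
          exact congrArg Sigma.fst this
        subst hii
        exact ⟨w, rfl⟩
    · intro i t x
      apply π.injective
      rw [Equiv.apply_symm_apply, hπ.comm_F, Equiv.apply_symm_apply]
    · intro i j x
      apply π.injective
      rw [Equiv.apply_symm_apply, hπ.comm_G, Equiv.apply_symm_apply]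
  have hab' : ⇑σ.symm ∘ b = a := by
    rw [← hab]
    funext t
    simp
  exact ⟨forward_transfer k P i a b σ hab π hπ hex,
    forward_transfer k P i b a σ.symm hab' π.symm hπ' hex'⟩
end Constr
end
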